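/- A finite sequence π of distinct keys from a linear order is equal to Postorder(T) for some binary search tree T if and only if π avoids the pattern (3,1,2), i.e., there are no indices i < j < k such that π_j < π_k < π_i. -/

import Mathlib

/-- Binary trees with keys at internal nodes. -/
inductive BT (α : Type) where
  | leaf : BT α
  | node : BT α → α → BT α → BT α
deriving DecidableEq

namespace BT

variable {α : Type} [LinearOrder α]

/-- The list of keys of a tree, in symmetric (inorder) order. -/
def keys : BT α → List α
  | leaf => []
  | node l v r => keys l ++ v :: keys r

/-- The number of nodes of a tree. -/
def size : BT α → ℕ
  | leaf => 0
  | node l _ r => size l + size r + 1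

/-- The symmetric-order (binary search tree) property. -/
def IsBST : BT α → Prop
  | leaf => True
  | node l v r => (∀ x ∈ l.keys, x < v) ∧ (∀ x ∈ r.keys, v < x) ∧ l.IsBST ∧ r.IsBST

/-- Preorder of a binary tree: root, then left subtree, then right subtree. -/
def preorder : BT α → List α
  | leaf => []
  | node l v r => v :: (preorder l ++ preorder r)

/-- Postorder of a binary tree: left subtree, right subtree, then root. -/
def postorder : BT α → List α
  | leaf => []
  | node l v r => postorder l ++ postorder r ++ [v]

/-- Reversed preorder: root, then right subtree, then left subtree
(the preorder of the mirror image). -/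
def revPreorder : BT α → List α
  | leaf => []
  | node l v r => v :: (revPreorder r ++ revPreorder l)

/-- Standard leaf insertion into a binary search tree. -/
def insertKey : BT α → α → BT α
  | leaf, x => node leaf x leaf
  | node l v r, x =>
    if x < v then node (insertKey l x) v r
    else if v < x then node l v (insertKey r x)
    else node l v r

/-- The depth (number of edges from the root) of the node with key `x`,
located by binary search. -/
def depthOf : BT α → α → ℕ
  | leaf, _ => 0
  | node l v r, x =>
    if x < v then depthOf l x + 1
    else if v < x then depthOf r x + 1
    else 0

/-- The search path to the key `x`: `false` records a step to a left child,
`true` a step to a right child. -/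
def pathTo : BT α → α → List Bool
  | leaf, _ => []
  | node l v r, x =>
    if x < v then false :: pathTo l x
    else if v < x then true :: pathTo r x
    else []

/-- The left-depth of the node with key `x`: the number of left-child edges
on the path from the root to it. -/
def leftDepthKey : BT α → α → ℕ
  | leaf, _ => 0
  | node l v r, x =>
    if x < v then leftDepthKey l x + 1
    else if v < x then leftDepthKey r x
    else 0

/-- The subtree rooted at the node with key `x` (empty if `x` is absent). -/
def subtreeAt : BT α → α → BT α
  | leaf, _ => leaf
  | node l v r, x =>
    if x < v then subtreeAt l x
    else if v < x then subtreeAt r x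
    else node l v r

/-- The key at the root, if any. -/
def rootKey : BT α → Option α
  | leaf => none
  | node _ v _ => some v

/-- The key of the parent of the node with key `x`, if any. -/
def parentKey : BT α → α → Option α
  | leaf, _ => none
  | node l v r, x =>
    if x < v then (if l.rootKey = some x then some v else l.parentKey x)
    else if v < x then (if r.rootKey = some x then some v else r.parentKey x)
    else none

/-- A step of the context (zipper) describing the search path from the root
to the current subtree: `inL v r` means the current subtree is the left child
of a node with key `v` and right subtree `r`; `inR l v` means it is the right
child of a node with key `v` and left subtree `l`. -/
inductive Ctx (α : Type) where
  | inL : α → BT α → Ctx α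
  | inR : BT α → α → Ctx α

/-- Descend along the search path for `x`, recording the context.
The head of the returned list corresponds to the immediate parent. -/
def descend : BT α → α → List (Ctx α) → List (Ctx α) × BT α
  | leaf, _, acc => (acc, leaf)
  | node l v r, x, acc =>
    if x < v then descend l x (Ctx.inL v r :: acc)
    else if v < x then descend r x (Ctx.inR l v :: acc)
    else (acc, node l v r)

/-- Reattach a subtree into its context, with no rotations. -/
def rebuild : BT α → List (Ctx α) → BT α
  | t, [] => t
  | t, Ctx.inL v r :: cs => rebuild (node t v r) cs
  | t, Ctx.inR l v :: cs => rebuild (node l v t) cs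

/-- Bottom-up splay steps: repeatedly apply zig / zig-zig / zig-zag steps to
the current subtree (rooted at the node being splayed) until the context is
exhausted. -/
def splayLoop : BT α → List (Ctx α) → BT α
  | t, [] => t
  | node a x b, [Ctx.inL v r] => node a x (node b v r)          -- zig
  | node a x b, [Ctx.inR l v] => node (node l v a) x b          -- zig
  | node a x b, Ctx.inL p pr :: Ctx.inL g gr :: cs =>           -- zig-zig
      splayLoop (node a x (node b p (node pr g gr))) cs
  | node a x b, Ctx.inL p pr :: Ctx.inR gl g :: cs =>           -- zig-zag
      splayLoop (node (node gl g a) x (node b p pr)) cs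
  | node a x b, Ctx.inR pl p :: Ctx.inR gl g :: cs =>           -- zig-zig
      splayLoop (node (node (node gl g pl) p a) x b) cs
  | node a x b, Ctx.inR pl p :: Ctx.inL g gr :: cs =>           -- zig-zag
      splayLoop (node (node pl p a) x (node b g gr)) cs
  | leaf, cs => rebuild leaf cs   -- unreachable when the splayed key is present

/-- Splaying the key `x`: if `x` occurs in the tree, bring its node to the
root by bottom-up splay steps; otherwise leave the tree unchanged. -/
def splay (x : α) (t : BT α) : BT α :=
  match descend t x [] with
  | (_, leaf) => t
  | (cs, found) => splayLoop found cs

/-- `α`-weight-balance in the sense of Nievergelt–Reingold: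
at each node, `min(|L|,|R|) + 1 ≥ α * (|x| + 1)`. -/
def WeightBalanced (a : ℝ) : BT α → Prop
  | leaf => True
  | node l _ r =>
      (min l.size r.size + 1 : ℝ) ≥ a * ((l.size + r.size + 1 : ℕ) + 1 : ℝ) ∧
      WeightBalanced a l ∧ WeightBalanced a r

/-- The rank of `x` in `t`: the number of keys of `t` that are `≤ x`. -/
def rank (t : BT α) (x : α) : ℕ := (t.keys.filter (fun y => y ≤ x)).length

end BT

section Defs

variable {α : Type} [LinearOrder α]

/-- The insertion tree of a sequence: leaf-insert the keys in order. -/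
def bstOf (π : List α) : BT α := π.foldl BT.insertKey BT.leaf

/-- `q` is a sub-root: a node of `t` not yet touched whose parent is touched,
where `touched` is the list of touched keys. -/
def IsSubRoot (t : BT α) (touched : List α) (q : α) : Prop :=
  q ∈ t.keys ∧ q ∉ touched ∧ ∃ p, t.parentKey q = some p ∧ p ∈ touched

/-- π avoids the pattern (2,3,1). -/
def Avoids231 (π : List α) : Prop :=
  ¬ ∃ i j k : Fin π.length, i < j ∧ j < k ∧ π.get k < π.get i ∧ π.get i < π.get j

/-- π avoids the pattern (3,1,2). -/
def Avoids312 (π : List α) : Prop :=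
  ¬ ∃ i j k : Fin π.length, i < j ∧ j < k ∧ π.get j < π.get k ∧ π.get k < π.get i

/-- π avoids the pattern (2,1,3). -/
def Avoids213 (π : List α) : Prop :=
  ¬ ∃ i j k : Fin π.length, i < j ∧ j < k ∧ π.get j < π.get i ∧ π.get i < π.get k

/-- π contains a strictly decreasing subsequence of length `k`. -/
def HasDecreasingSubseq (π : List α) (k : ℕ) : Prop :=
  ∃ s : List α, s.Sublist π ∧ s.length = k ∧ s.Chain' (· > ·)

/-- Splay the keys of a list in order, starting from `t`. -/
def splaySeq (π : List α) (t : BT α) : BT α := π.foldl (fun s x => BT.splay x s) t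

/-- The cost of splaying a sequence of keys starting from `t`:
each splay costs the current depth of the requested key plus one. -/
def splayCost : BT α → List α → ℕ
  | _, [] => 0
  | t, x :: xs => (t.depthOf x + 1) + splayCost (BT.splay x t) xs

/-- The cost of insertion splaying a sequence of keys starting from `t`:
each key is leaf-inserted, then the new node is splayed, at a cost of
its depth after insertion plus one. -/
def insertSplayCost : BT α → List α → ℕ
  | _, [] => 0
  | t, x :: xs =>
    ((t.insertKey x).depthOf x + 1) + insertSplayCost (BT.splay x (t.insertKey x)) xs

/-- `DF rk xs` = Σ_{i≥2} log₂(|rk(x_i) − rk(x_{i−1})| + 1). -/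
noncomputable def DF (rk : α → ℕ) (xs : List α) : ℝ :=
  ((xs.zip xs.tail).map
    (fun p => Real.logb 2 (|(rk p.2 : ℝ) - (rk p.1 : ℝ)| + 1))).sum

/-- The rank of `x` within the sequence `σ` itself. -/
def rankIn (σ : List α) (x : α) : ℕ := (σ.filter (fun y => y ≤ x)).length

/-- The dynamic-finger sum of a sequence, with ranks computed in the
sequence itself. -/
noncomputable def DFseq (σ : List α) : ℝ := DF (rankIn σ) σ

end Defs

section AuxProof

open List

variable {α : Type} [LinearOrder α]

lemma mem_postorder_iff {t : BT α} {x : α} : x ∈ t.postorder ↔ x ∈ t.keys := by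
  induction t with
  | leaf => simp [BT.postorder, BT.keys]
  | node l v r ihl ihr =>
    simp [BT.postorder, BT.keys, ihl, ihr]
    tauto

lemma sublist_triple {l : List α} {i j k : Fin l.length} (hij : i < j) (hjk : j < k) :
    [l.get i, l.get j, l.get k] <+ l := by
  have hi := i.2; have hj := j.2; have hk := k.2
  have hij' : (i : ℕ) < j := hij
  have hjk' : (j : ℕ) < k := hjk
  refine List.sublist_of_orderEmbedding_getElem?_eq
    (OrderEmbedding.ofStrictMono
      (fun n => if n = 0 then (i : ℕ) else if n = 1 then (j : ℕ)
        else if n = 2 then (k : ℕ) else l.length + n) ?_) ?_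
  · refine (show StrictMono _ from fun a b hab => ?_)
    split_ifs <;> omega
  · intro ix
    match ix with
    | 0 => simp [hi]
    | 1 => simp [hj]
    | 2 => simp [hk]
    | (n+3) =>
      simp only [OrderEmbedding.coe_ofStrictMono, if_neg (by omega : ¬ n+3 = 0),
        if_neg (by omega : ¬ n+3 = 1), if_neg (by omega : ¬ n+3 = 2)]
      rw [List.getElem?_eq_none (by simp), List.getElem?_eq_none (by omega)]

lemma postorder_no312 (t : BT α) : t.IsBST →
    ∀ a b c : α, [a, b, c] <+ t.postorder → b < c → c < a → False := by
  induction t with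
  | leaf => intro _ a b c h _ _; simp [BT.postorder] at h
  | node l v r ihl ihr =>
    rintro ⟨hl, hr, hbl, hbr⟩ a b c hsub hbc hca
    have hml : ∀ x ∈ l.postorder, x < v := fun x hx => hl x (mem_postorder_iff.mp hx)
    have hmr : ∀ x ∈ r.postorder, v < x := fun x hx => hr x (mem_postorder_iff.mp hx)
    rw [BT.postorder, List.sublist_append_iff] at hsub
    obtain ⟨s1, s2, heq, h1, h2⟩ := hsub
    rw [List.sublist_append_iff] at h1
    obtain ⟨u1, u2, hu, hul, hur⟩ := h1
    subst hu
    have hs2 : s2 = [] ∨ s2 = [v] := by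
      cases h2 with
      | cons _ h => left; simpa using h
      | cons_cons _ h => right; simpa using h
    rcases hs2 with rfl | rfl
    · rw [List.append_nil] at heq
      rcases u1 with _ | ⟨x, _ | ⟨y, _ | ⟨z, _ | ⟨w, u1⟩⟩⟩⟩
      · simp only [List.nil_append] at heq
        exact ihr hbr a b c (heq ▸ hur) hbc hca
      · simp only [List.cons_append, List.nil_append, List.cons.injEq] at heq
        obtain ⟨rfl, heq⟩ := heq
        have ha : a < v := hml a (hul.subset (by simp))
        have hb : v < b := hmr b (hur.subset (by rw [← heq]; simp))
        exact absurd (hb.trans (hbc.trans hca)) (not_lt.mpr ha.le)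
      · simp only [List.cons_append, List.nil_append, List.cons.injEq] at heq
        obtain ⟨rfl, rfl, heq⟩ := heq
        have ha : a < v := hml a (hul.subset (by simp))
        have hc : v < c := hmr c (hur.subset (by rw [← heq]; simp))
        exact absurd (hc.trans hca) (not_lt.mpr ha.le)
      · simp only [List.cons_append, List.nil_append, List.cons.injEq] at heq
        obtain ⟨rfl, rfl, rfl, -⟩ := heq
        exact ihl hbl a b c (by simpa using hul) hbc hca
      · have := congrArg List.length heq
        simp at this
    · have hlen : u1.length + u2.length = 2 := by
        have := congrArg List.length heq
        simp at this
        omega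
      have hc : c = v := by
        have h := congrArg List.getLast? heq
        rw [show u1 ++ u2 ++ [v] = (u1 ++ u2) ++ [v] from rfl,
          List.getLast?_concat] at h
        simpa using h
      rcases u1 with _ | ⟨x, _ | ⟨y, _ | ⟨z, u1⟩⟩⟩
      · simp only [List.nil_append] at heq hlen
        have hu2 : u2 = [a, b] := by
          rcases u2 with _ | ⟨p, _ | ⟨q, _ | _⟩⟩ <;> simp_all
        have hb : v < b := hmr b (hur.subset (by simp [hu2]))
        exact absurd (hc ▸ hbc) (not_lt.mpr hb.le)
      · simp only [List.cons_append, List.cons.injEq] at heq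
        obtain ⟨rfl, -⟩ := heq
        have ha : a < v := hml a (hul.subset (by simp))
        exact absurd (hc ▸ hca) (not_lt.mpr ha.le)
      · simp only [List.cons_append, List.cons.injEq] at heq
        obtain ⟨rfl, -⟩ := heq
        have ha : a < v := hml a (hul.subset (by simp))
        exact absurd (hc ▸ hca) (not_lt.mpr ha.le)
      · simp only [List.length_cons] at hlen
        omega

lemma split_unmixed (p : α → Bool) :
    ∀ σ : List α, (∀ a b, [a, b] <+ σ → p a = false → p b = true → False) →
      σ = σ.filter p ++ σ.filter (fun x => !p x) := by
  intro σ
  induction σ with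
  | nil => intro _; rfl
  | cons x rest ih =>
    intro hmix
    cases hx : p x with
    | true =>
      have := ih (fun a b h ha hb => hmix a b (h.cons x) ha hb)
      simp [List.filter_cons, hx]
      exact this
    | false =>
      have hall : ∀ y ∈ rest, p y = false := by
        intro y hy
        by_contra h
        exact hmix x y (List.Sublist.cons₂ x (List.singleton_sublist.mpr hy)) hx
          (by simpa using h)
      have h1 : List.filter p (x :: rest) = [] := by
        rw [List.filter_eq_nil_iff]
        intro a ha
        rcases List.mem_cons.mp ha with rfl | ha
        · simp [hx]
        · simp [hall a ha]
      have h2 : List.filter (fun x => !p x) (x :: rest) = x :: rest := by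
        rw [List.filter_eq_self]
        intro a ha
        rcases List.mem_cons.mp ha with rfl | ha
        · simp [hx]
        · simp [hall a ha]
      rw [h1, h2, List.nil_append]

lemma exists_tree : ∀ (n : ℕ) (π : List α), π.length ≤ n → π.Nodup →
    (∀ a b c : α, [a, b, c] <+ π → b < c → c < a → False) →
    ∃ T : BT α, T.IsBST ∧ T.postorder = π := by
  intro n
  induction n with
  | zero =>
    intro π hlen _ _
    have : π = [] := List.length_eq_zero_iff.mp (Nat.le_zero.mp hlen)
    exact ⟨BT.leaf, trivial, by simp [this, BT.postorder]⟩
  | succ n ih =>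
    intro π hlen hnd hav
    rcases π.eq_nil_or_concat with rfl | ⟨σ, v, rfl⟩
    · exact ⟨BT.leaf, trivial, rfl⟩
    rw [List.concat_eq_append] at *
    have hvσ : v ∉ σ := by
      intro h
      exact (List.disjoint_of_nodup_append hnd) h (by simp)
    have hndσ : σ.Nodup := hnd.of_append_left
    set p : α → Bool := fun x => decide (x < v) with hp
    have hmix : ∀ a b, [a, b] <+ σ → p a = false → p b = true → False := by
      intro a b hab ha hb
      have haσ : a ∈ σ := hab.subset (by simp)
      have hbv : b < v := by simpa [hp] using hb
      have hva : v < a :=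
        lt_of_le_of_ne (not_lt.mp (by simpa [hp] using ha))
          (fun h => hvσ (h ▸ haσ))
      exact hav a b v ((hab.append (List.Sublist.refl [v]))) hbv hva
    have hsplit := split_unmixed p σ hmix
    set A := σ.filter p with hA
    set B := σ.filter (fun x => !p x) with hB
    have hAs : A <+ σ := σ.filter_sublist
    have hBs : B <+ σ := σ.filter_sublist
    have hσπ : σ <+ σ ++ [v] := List.sublist_append_left σ [v]
    have hlenσ : σ.length ≤ n := by
      have := hlen; simp at this; omega
    obtain ⟨TA, hbA, hpA⟩ := ih A (le_trans hAs.length_le hlenσ) (hndσ.sublist hAs)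
      (fun a b c h => hav a b c (h.trans (hAs.trans hσπ)))
    obtain ⟨TB, hbB, hpB⟩ := ih B (le_trans hBs.length_le hlenσ) (hndσ.sublist hBs)
      (fun a b c h => hav a b c (h.trans (hBs.trans hσπ)))
    refine ⟨BT.node TA v TB, ⟨?_, ?_, hbA, hbB⟩, ?_⟩
    · intro x hx
      have : x ∈ A := hpA ▸ mem_postorder_iff.mpr hx
      have := List.of_mem_filter this
      simpa [hp] using this
    · intro x hx
      have hxB : x ∈ B := hpB ▸ mem_postorder_iff.mpr hx
      have hxσ : x ∈ σ := hBs.subset hxB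
      have := List.of_mem_filter hxB
      have hnlt : ¬ x < v := by simpa [hp] using this
      exact lt_of_le_of_ne (not_lt.mp hnlt) (fun h => hvσ (h ▸ hxσ))
    · show TA.postorder ++ TB.postorder ++ [v] = σ ++ [v]
      rw [hpA, hpB, ← hsplit]

end AuxProof

/-- A sequence of distinct keys is the postorder of some binary search tree
iff it avoids the pattern (3,1,2). -/
theorem postorder_iff_avoids312 {α : Type} [LinearOrder α]
    (π : List α) (hnd : π.Nodup) :
    (∃ T : BT α, T.IsBST ∧ T.postorder = π) ↔ Avoids312 π := by
  constructor
  · rintro ⟨T, hb, rfl⟩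
    rintro ⟨i, j, k, hij, hjk, h1, h2⟩
    exact postorder_no312 T hb _ _ _ (sublist_triple hij hjk) h1 h2
  · intro hav
    apply exists_tree π.length π le_rfl hnd
    intro a b c hsub hbc hca
    rw [List.sublist_iff_exists_fin_orderEmbedding_get_eq] at hsub
    obtain ⟨f, hf⟩ := hsub
    have e0 : π.get (f ⟨0, by norm_num⟩) = a := (hf ⟨0, by norm_num⟩).symm
    have e1 : π.get (f ⟨1, by norm_num⟩) = b := (hf ⟨1, by norm_num⟩).symm
    have e2 : π.get (f ⟨2, by norm_num⟩) = c := (hf ⟨2, by norm_num⟩).symm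
    have h01 : f ⟨0, by norm_num⟩ < f ⟨1, by norm_num⟩ :=
      f.lt_iff_lt.mpr (Fin.mk_lt_mk.mpr (by norm_num))
    have h12 : f ⟨1, by norm_num⟩ < f ⟨2, by norm_num⟩ :=
      f.lt_iff_lt.mpr (Fin.mk_lt_mk.mpr (by norm_num))
    exact hav ⟨f ⟨0, by norm_num⟩, f ⟨1, by norm_num⟩, f ⟨2, by norm_num⟩,
      h01, h12, by rw [e1, e2]; exact hbc, by rw [e2, e0]; exact hca⟩
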